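/- Let n ≥ 2 and let J_n(x) = (h_{n,2}(x))^4 / C(n+1,2)^4 − h_{n,3}(x) · (h_{n,1}(x))^5 / (C(n+2,3) · n^5). If p is a point of the open simplex Δ_n° = {x ∈ (0,∞)^n : x_1+⋯+x_n = 1} at which J_n attains its minimum over Δ_n°, then the coordinates of p take at most two distinct values; i.e., the set {p_1,…,p_n} has cardinality at most 2. -/

import Mathlib

/-- The complete homogeneous symmetric polynomial `h_{n,k}`, as a function on `ℝ^n`:
the sum of all monomials of total degree `k` in `x 0, …, x (n-1)` (with `h_{n,0} = 1`). -/
noncomputable def hsym (n k : ℕ) (x : Fin n → ℝ) : ℝ :=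
  ∑ d ∈ Finset.Nat.antidiagonalTuple n k, ∏ i, x i ^ d i

lemma hsym_zero (n : ℕ) (x : Fin n → ℝ) : hsym n 0 x = 1 := by
  simp [hsym, Finset.Nat.antidiagonalTuple_zero_right]

lemma hsym_nil (k : ℕ) (x : Fin 0 → ℝ) : hsym 0 (k + 1) x = 0 := by
  simp [hsym]

lemma hsym_succ (n k : ℕ) (x : Fin (n + 1) → ℝ) :
    hsym (n + 1) k x = ∑ a ∈ Finset.range (k + 1), x 0 ^ a * hsym n (k - a) (x ∘ Fin.succ) := by
  classical
  rw [hsym]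
  simp_rw [hsym, Finset.mul_sum]
  rw [Finset.sum_sigma']
  refine Finset.sum_nbij' (fun d => ⟨d 0, d ∘ Fin.succ⟩) (fun s => Fin.cons s.1 s.2) ?_ ?_ ?_ ?_ ?_
  · intro d hd
    rw [Finset.Nat.mem_antidiagonalTuple] at hd
    rw [Fin.sum_univ_succ] at hd
    refine Finset.mem_sigma.2 ⟨Finset.mem_range.2 ?_, Finset.Nat.mem_antidiagonalTuple.2 ?_⟩
    · exact Nat.lt_succ_of_le (Nat.le.intro hd)
    · show ∑ i, d (Fin.succ i) = k - d 0
      rw [← hd, Nat.add_sub_cancel_left]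
  · intro s hs
    rw [Finset.mem_sigma, Finset.mem_range] at hs
    rw [Finset.Nat.mem_antidiagonalTuple, Fin.sum_univ_succ]
    simp only [Fin.cons_zero, Fin.cons_succ]
    have := Finset.Nat.mem_antidiagonalTuple.1 hs.2
    omega
  · intro d hd
    exact Fin.cons_self_tail d
  · rintro ⟨a, e⟩ hs
    refine congrArg (Sigma.mk a) ?_
    funext i
    simp
  · intro d hd
    rw [Fin.prod_univ_succ]
    simp [Function.comp]

lemma hsym_one_eq : ∀ (n : ℕ) (x : Fin n → ℝ), hsym n 1 x = ∑ i, x i := by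
  intro n
  induction n with
  | zero => intro x; rw [show (1:ℕ) = 0 + 1 from rfl, hsym_nil]; simp
  | succ n ih =>
    intro x
    rw [hsym_succ, Fin.sum_univ_succ]
    norm_num [Finset.sum_range_succ, hsym_zero, ih]
    ring

lemma hsym_two_eq : ∀ (n : ℕ) (x : Fin n → ℝ),
    hsym n 2 x = ((∑ i, x i) ^ 2 + ∑ i, x i ^ 2) / 2 := by
  intro n
  induction n with
  | zero => intro x; rw [show (2:ℕ) = 1 + 1 from rfl, hsym_nil]; simp
  | succ n ih =>
    intro x
    rw [hsym_succ, Fin.sum_univ_succ, Fin.sum_univ_succ (f := fun i => x i ^ 2)]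
    norm_num [Finset.sum_range_succ, hsym_zero, ih, hsym_one_eq]
    ring

lemma hsym_three_eq : ∀ (n : ℕ) (x : Fin n → ℝ),
    hsym n 3 x = ((∑ i, x i) ^ 3 + 3 * (∑ i, x i) * (∑ i, x i ^ 2)
      + 2 * ∑ i, x i ^ 3) / 6 := by
  intro n
  induction n with
  | zero => intro x; rw [show (3:ℕ) = 2 + 1 from rfl, hsym_nil]; simp
  | succ n ih =>
    intro x
    rw [hsym_succ, Fin.sum_univ_succ, Fin.sum_univ_succ (f := fun i => x i ^ 2),
      Fin.sum_univ_succ (f := fun i => x i ^ 3)]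
    norm_num [Finset.sum_range_succ, hsym_zero, ih, hsym_one_eq, hsym_two_eq]
    ring

lemma sum_pow_update_update {n : ℕ} (p : Fin n → ℝ) {i j : Fin n} (hij : i ≠ j)
    (a b : ℝ) (k : ℕ) :
    ∑ l, Function.update (Function.update p i a) j b l ^ k
      = (∑ l, p l ^ k) - p i ^ k - p j ^ k + a ^ k + b ^ k := by
  classical
  have step : ∀ (g : Fin n → ℝ) (t : Fin n) (v : ℝ),
      ∑ l, Function.update g t v l ^ k = (∑ l, g l ^ k) - g t ^ k + v ^ k := by
    intro g t v
    have hupd : ∀ l, Function.update g t v l ^ k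
        = Function.update (fun m => g m ^ k) t (v ^ k) l := by
      intro l
      rcases eq_or_ne l t with rfl | h
      · simp
      · simp [Function.update_of_ne h]
    simp_rw [hupd]
    rw [Finset.sum_update_of_mem (Finset.mem_univ t),
      Finset.sum_sdiff_eq_sub (Finset.subset_univ _), Finset.sum_singleton]
    ring
  rw [step, step, Function.update_of_ne hij.symm]
  ring

/-- `J_n = H_{n,(2^4)} − H_{n,(3,1^5)}` as a function on `ℝ^n`. -/
noncomputable def Jfun (n : ℕ) (x : Fin n → ℝ) : ℝ :=
  (hsym n 2 x) ^ 4 / (((n + 1).choose 2 : ℝ)) ^ 4 -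
    hsym n 3 x * (hsym n 1 x) ^ 5 / (((n + 2).choose 3 : ℝ) * (n : ℝ) ^ 5)

lemma pair_condition (n : ℕ) (hn : 2 ≤ n)
    (p : Fin n → ℝ) (hp_pos : ∀ i, 0 < p i) (hp_sum : ∑ i, p i = 1)
    (hmin : ∀ x : Fin n → ℝ, (∀ i, 0 < x i) → ∑ i, x i = 1 → Jfun n p ≤ Jfun n x)
    {i j : Fin n} (hij : i ≠ j) (hpij : p i ≠ p j) :
    4 * hsym n 2 p ^ 3 / ((n + 1).choose 2 : ℝ) ^ 4
      = (1 + p i + p j) / (((n + 2).choose 3 : ℝ) * (n : ℝ) ^ 5) := by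
  classical
  set c : ℝ := ((n + 1).choose 2 : ℝ) ^ 4 with hc
  set d : ℝ := ((n + 2).choose 3 : ℝ) * (n : ℝ) ^ 5 with hd
  set m : ℝ := (p i + p j) / 2 with hm
  set u0 : ℝ := (p i - p j) / 2 with hu0
  have hpi : p i = m + u0 := by rw [hm, hu0]; ring
  have hpj : p j = m - u0 := by rw [hm, hu0]; ring
  have hmpos : 0 < m := by have := hp_pos i; have := hp_pos j; rw [hm]; linarith
  have hu0ne : u0 ≠ 0 := by
    intro h; apply hpij; rw [hpi, hpj, h]; ring
  have hprodpos : 0 < m ^ 2 - u0 ^ 2 := by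
    have : m ^ 2 - u0 ^ 2 = p i * p j := by rw [hpi, hpj]; ring
    rw [this]; exact mul_pos (hp_pos i) (hp_pos j)
  set ε : ℝ := min (u0 ^ 2) (m ^ 2 - u0 ^ 2) with hε
  have hεpos : 0 < ε := lt_min (by positivity) hprodpos
  set K : ℝ := hsym n 2 p with hK
  set B : ℝ := hsym n 3 p with hB
  set s2 : ℝ := ∑ l, p l ^ 2 with hs2
  set s3 : ℝ := ∑ l, p l ^ 3 with hs3
  have hKval : K = (1 + s2) / 2 := by
    rw [hK, hsym_two_eq, hp_sum, hs2]; ring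
  have hBval : B = (1 + 3 * s2 + 2 * s3) / 6 := by
    rw [hB, hsym_three_eq, hp_sum, hs2, hs3]; ring
  set Ψ : ℝ → ℝ := fun w => (K + w) ^ 4 / c - (B + (1 + 2 * m) * w) / d with hΨ
  have hJp : Jfun n p = Ψ 0 := by
    rw [Jfun, hΨ, hsym_one_eq, hp_sum, ← hK, ← hB, ← hc, ← hd]
    simp
  have hmin' : ∀ w : ℝ, |w| < ε → Ψ 0 ≤ Ψ w := by
    intro w hw
    obtain ⟨hw1, hw2⟩ := abs_lt.1 hw
    have hεle1 : ε ≤ u0 ^ 2 := min_le_left _ _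
    have hεle2 : ε ≤ m ^ 2 - u0 ^ 2 := min_le_right _ _
    have hwpos : 0 < u0 ^ 2 + w := by linarith
    set u : ℝ := Real.sqrt (u0 ^ 2 + w) with hu
    have hu2 : u ^ 2 = u0 ^ 2 + w := Real.sq_sqrt hwpos.le
    have hunn : 0 ≤ u := Real.sqrt_nonneg _
    have hult : u < m := by
      rw [hu, show m = Real.sqrt (m ^ 2) from (Real.sqrt_sq hmpos.le).symm]
      exact Real.sqrt_lt_sqrt hwpos.le (by linarith)
    set q : Fin n → ℝ := Function.update (Function.update p i (m + u)) j (m - u) with hq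
    have hq_pos : ∀ l, 0 < q l := by
      intro l
      rcases eq_or_ne l j with rfl | hlj
      · rw [hq, Function.update_self]; linarith
      · rw [hq, Function.update_of_ne hlj]
        rcases eq_or_ne l i with rfl | hli
        · rw [Function.update_self]; linarith
        · rw [Function.update_of_ne hli]; exact hp_pos l
    have hq1 : ∑ l, q l = 1 := by
      have := sum_pow_update_update p hij (m + u) (m - u) 1
      simp only [pow_one] at this
      rw [hq, this, hp_sum, hpi, hpj]; ring
    have hq2 : ∑ l, q l ^ 2 = s2 + 2 * w := by
      rw [hq, sum_pow_update_update p hij _ _ 2, ← hs2, hpi, hpj]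
      linear_combination 2 * hu2
    have hq3 : ∑ l, q l ^ 3 = s3 + 6 * m * w := by
      rw [hq, sum_pow_update_update p hij _ _ 3, ← hs3, hpi, hpj]
      linear_combination 6 * m * hu2
    have hJq : Jfun n q = Ψ w := by
      have e1 : hsym n 1 q = 1 := by rw [hsym_one_eq]; exact hq1
      have e2 : hsym n 2 q = K + w := by
        rw [hsym_two_eq, hq1, hq2, hKval]; ring
      have e3 : hsym n 3 q = B + (1 + 2 * m) * w := by
        rw [hsym_three_eq, hq1, hq2, hq3, hBval]; ring
      rw [Jfun, e1, e2, e3, hΨ, ← hc, ← hd]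
      simp
    rw [← hJp]
    exact (hmin q hq_pos hq1).trans hJq.le
  have hloc : IsLocalMin Ψ 0 := by
    refine Metric.eventually_nhds_iff.2 ⟨ε, hεpos, fun {w} hw => hmin' w ?_⟩
    simpa [Real.dist_eq] using hw
  have hD : HasDerivAt Ψ (4 * K ^ 3 / c - (1 + 2 * m) / d) 0 := by
    have h1 : HasDerivAt (fun w : ℝ => (K + w) ^ 4 / c) (4 * K ^ 3 / c) 0 := by
      have := (((hasDerivAt_id (0 : ℝ)).const_add K).pow 4).div_const c
      simpa using this
    have h2 : HasDerivAt (fun w : ℝ => (B + (1 + 2 * m) * w) / d)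
        ((1 + 2 * m) / d) 0 := by
      have := (((hasDerivAt_id (0 : ℝ)).const_mul (1 + 2 * m)).const_add B).div_const d
      simpa using this
    exact h1.sub h2
  have hzero : 4 * K ^ 3 / c - (1 + 2 * m) / d = 0 := by
    rw [← hD.deriv]; exact hloc.deriv_eq_zero
  have : 4 * K ^ 3 / c = (1 + 2 * m) / d := by linarith
  rw [this, hm]; ring_nf

/-- If `p` minimizes `J_n` over the open simplex
`Δ_n° = {x ∈ (0,∞)^n : x_1+⋯+x_n = 1}` (with `n ≥ 2`), then the coordinates of `p`
take at most two distinct values. -/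
theorem minimizer_has_at_most_two_values (n : ℕ) (hn : 2 ≤ n)
    (p : Fin n → ℝ) (hp_pos : ∀ i, 0 < p i) (hp_sum : ∑ i, p i = 1)
    (hmin : ∀ x : Fin n → ℝ, (∀ i, 0 < x i) → ∑ i, x i = 1 → Jfun n p ≤ Jfun n x) :
    (Finset.univ.image p).card ≤ 2 := by
  by_contra hcard
  push_neg at hcard
  obtain ⟨a, b, c, ha, hb, hc, hab, hac, hbc⟩ := Finset.two_lt_card_iff.1 hcard
  obtain ⟨i, -, rfl⟩ := Finset.mem_image.1 ha
  obtain ⟨j, -, rfl⟩ := Finset.mem_image.1 hb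
  obtain ⟨k, -, rfl⟩ := Finset.mem_image.1 hc
  have hij : i ≠ j := fun h => hab (by rw [h])
  have hik : i ≠ k := fun h => hac (by rw [h])
  have h1 := pair_condition n hn p hp_pos hp_sum hmin hij hab
  have h2 := pair_condition n hn p hp_pos hp_sum hmin hik hac
  have hdpos : (0 : ℝ) < ((n + 2).choose 3 : ℝ) * (n : ℝ) ^ 5 := by
    have h3 : 0 < (n + 2).choose 3 := Nat.choose_pos (by omega)
    have h4 : (0 : ℝ) < (n : ℝ) := by exact_mod_cast (by omega : 0 < n)
    positivity
  have heq : (1 + p i + p j) / (((n + 2).choose 3 : ℝ) * (n : ℝ) ^ 5)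
      = (1 + p i + p k) / (((n + 2).choose 3 : ℝ) * (n : ℝ) ^ 5) := by
    rw [← h1, ← h2]
  have : p j = p k := by
    field_simp at heq
    have hC : (0 : ℝ) < ((n + 2).choose 3 : ℝ) := Nat.cast_pos.2 (Nat.choose_pos (by omega))
    rw [div_left_inj' hC.ne'] at heq
    linarith
  exact hbc this
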